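/- arXiv:2508.12947 — 2 statements merged into one kernel-verified Lean document; each statement's English description precedes it below -/
import Mathlib

section
/- Let (A_k)_{k=1,…,K} be a partition of Q into nonempty sets and suppose ν(C) = Σ_{k=1}^K ν_k(C ∩ A_k) for all C ⊆ Q, where each ν_k is a real-valued function on subsets of Q. Then for every permutation π of (1,…,q), the paired single-permutation PermutationSHAP estimates satisfy the additive recovery property Σ_{j ∈ A_k} φ̂_j^{(1)} = Σ_{j ∈ A_k} φ_j for every 1 ≤ k ≤ K, where φ_j are the Shapley values of ν. -/
open Finset

/-- Shapley value of player `j` for value function `ν` on coalitions of `Fin q`. -/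
noncomputable def shapley {q : ℕ} (ν : Finset (Fin q) → ℝ) (j : Fin q) : ℝ :=
  ((q : ℝ))⁻¹ * ∑ C ∈ (Finset.univ.erase j).powerset,
    (((q - 1).choose C.card : ℝ))⁻¹ * (ν (insert j C) - ν C)

/-- The coalition `C_{π,j}` of players preceding `j` in the permutation `π`,
where `π i` is the player at position `i`. -/
def preceding {q : ℕ} (π : Equiv.Perm (Fin q)) (j : Fin q) : Finset (Fin q) :=
  (Finset.univ.filter (fun i : Fin q => i < π.symm j)).image π

/-- The reversed permutation `ρ(π) = (π_q, …, π_1)`. -/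
def reversedPerm {q : ℕ} (π : Equiv.Perm (Fin q)) : Equiv.Perm (Fin q) :=
  Fin.revPerm.trans π

/-- Paired single-permutation PermutationSHAP estimate. -/
noncomputable def pairedEstimate {q : ℕ} (ν : Finset (Fin q) → ℝ)
    (π : Equiv.Perm (Fin q)) (j : Fin q) : ℝ :=
  (1 / 2 : ℝ) * (ν (insert j (preceding π j)) - ν (preceding π j)
    + ν (insert j (preceding (reversedPerm π) j)) - ν (preceding (reversedPerm π) j))

lemma mem_preceding' {q : ℕ} (π : Equiv.Perm (Fin q)) (j x : Fin q) :
    x ∈ (Finset.univ.filter (fun i : Fin q => i < π.symm j)).image π ↔ π.symm x < π.symm j := by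
  simp only [mem_image, mem_filter, mem_univ, true_and]
  constructor
  · rintro ⟨i, hi, rfl⟩; simpa using hi
  · intro h; exact ⟨π.symm x, h, by simp⟩

lemma telescope {q : ℕ} (g : Finset (Fin q) → ℝ) (ord : Fin q → Fin q)
    (hord : Function.Injective ord) (A : Finset (Fin q)) :
    ∑ j ∈ A, (g (insert j (A.filter (fun i => ord i < ord j)))
      - g (A.filter (fun i => ord i < ord j))) = g A - g ∅ := by
  induction A using Finset.strongInduction with
  | _ A ih =>
    rcases A.eq_empty_or_nonempty with rfl | hA
    · simp
    · obtain ⟨j₀, hj₀, hmax⟩ := A.exists_max_image ord hA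
      have hlt : ∀ i ∈ A, i ≠ j₀ → ord i < ord j₀ := by
        intro i hi hne
        exact lt_of_le_of_ne (hmax i hi) (fun h => hne (hord h))
      have hfil : A.filter (fun i => ord i < ord j₀) = A.erase j₀ := by
        ext x
        simp only [mem_filter, mem_erase]
        constructor
        · rintro ⟨hx, hlt'⟩; exact ⟨fun h => by subst h; exact lt_irrefl _ hlt', hx⟩
        · rintro ⟨hne, hx⟩; exact ⟨hx, hlt _ hx hne⟩
      have hins : insert j₀ (A.erase j₀) = A := Finset.insert_erase hj₀
      rw [← Finset.sum_erase_add A _ hj₀, hfil, hins]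
      have hfil2 : ∀ j ∈ A.erase j₀, A.filter (fun i => ord i < ord j)
          = (A.erase j₀).filter (fun i => ord i < ord j) := by
        intro j hj
        ext x
        simp only [mem_filter, mem_erase]
        constructor
        · rintro ⟨hx, hlt'⟩
          refine ⟨⟨fun h => ?_, hx⟩, hlt'⟩
          subst h
          exact absurd (hlt'.trans (hlt j (Finset.mem_of_mem_erase hj) (Finset.ne_of_mem_erase hj))) (lt_irrefl _)
        · rintro ⟨⟨_, hx⟩, hlt'⟩; exact ⟨hx, hlt'⟩
      rw [Finset.sum_congr rfl (fun j hj => by rw [hfil2 j hj])]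
      rw [ih (A.erase j₀) (Finset.erase_ssubset hj₀)]
      ring


lemma shapley_efficiency {q : ℕ} (hq : 1 ≤ q) (w : Finset (Fin q) → ℝ) :
    ∑ j, shapley w j = w Finset.univ - w ∅ := by
  classical
  set c : ℕ → ℝ := fun s => (((q - 1).choose s : ℕ) : ℝ)⁻¹ with hc
  -- step: rewrite each inner sum over powerset as a sum over all subsets of univ
  have hpow : ∀ j : Fin q, ((Finset.univ.erase j).powerset : Finset (Finset (Fin q)))
      = (Finset.univ : Finset (Fin q)).powerset.filter (fun S => j ∉ S) := by
    intro j
    ext S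
    simp [Finset.subset_erase]
  have step1 : ∀ j : Fin q,
      ∑ C ∈ (Finset.univ.erase j).powerset, c C.card * w (insert j C)
      = ∑ S ∈ (Finset.univ : Finset (Fin q)).powerset,
          (if j ∈ S then c (S.card - 1) * w S else 0) := by
    intro j
    rw [← Finset.sum_filter]
    refine Finset.sum_bij' (fun C _ => insert j C) (fun S _ => S.erase j) ?_ ?_ ?_ ?_ ?_
    · intro C hC
      simp only [Finset.mem_powerset, hpow] at hC
      simp [Finset.mem_filter]
    · intro S hS
      simp only [Finset.mem_filter, Finset.mem_powerset] at hS
      simp only [Finset.mem_powerset, hpow, Finset.mem_filter]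
      exact ⟨(Finset.erase_subset _ _).trans hS.1, Finset.notMem_erase _ _⟩
    · intro C hC
      simp only [Finset.mem_powerset, hpow, Finset.mem_filter] at hC
      exact Finset.erase_insert hC.2
    · intro S hS
      simp only [Finset.mem_filter, Finset.mem_powerset] at hS
      exact Finset.insert_erase hS.2
    · intro C hC
      simp only [Finset.mem_powerset, hpow, Finset.mem_filter] at hC
      rw [Finset.card_insert_of_notMem hC.2]
      simp
  have step2 : ∀ j : Fin q,
      ∑ C ∈ (Finset.univ.erase j).powerset, c C.card * w C
      = ∑ S ∈ (Finset.univ : Finset (Fin q)).powerset,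
          (if j ∉ S then c S.card * w S else 0) := by
    intro j
    rw [← Finset.sum_filter, hpow j]
  -- combine
  have key : ∑ j : Fin q, ∑ C ∈ (Finset.univ.erase j).powerset,
      c C.card * (w (insert j C) - w C)
      = ∑ S ∈ (Finset.univ : Finset (Fin q)).powerset,
        ((S.card : ℝ) * (c (S.card - 1) * w S) - ((q - S.card : ℕ) : ℝ) * (c S.card * w S)) := by
    have : ∀ j : Fin q, ∑ C ∈ (Finset.univ.erase j).powerset,
        c C.card * (w (insert j C) - w C)
        = ∑ S ∈ (Finset.univ : Finset (Fin q)).powerset,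
          ((if j ∈ S then c (S.card - 1) * w S else 0) - (if j ∉ S then c S.card * w S else 0)) := by
      intro j
      rw [Finset.sum_sub_distrib, ← step1 j, ← step2 j, ← Finset.sum_sub_distrib]
      exact Finset.sum_congr rfl fun C _ => by ring
    rw [Finset.sum_congr rfl fun j _ => this j, Finset.sum_comm]
    refine Finset.sum_congr rfl fun S hS => ?_
    rw [Finset.sum_sub_distrib]
    congr 1
    · rw [Finset.sum_ite_mem, Finset.univ_inter, Finset.sum_const, nsmul_eq_mul]
    · have : ∀ j : Fin q, (if j ∉ S then c S.card * w S else 0)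
          = if j ∈ Sᶜ then c S.card * w S else 0 := by intro j; simp
      rw [Finset.sum_congr rfl fun j _ => this j, Finset.sum_ite_mem, Finset.univ_inter,
        Finset.sum_const, nsmul_eq_mul, Finset.card_compl, Fintype.card_fin]
  -- coefficient computation
  have coeff : ∀ S ∈ (Finset.univ : Finset (Fin q)).powerset, S ≠ ∅ → S ≠ Finset.univ →
      ((S.card : ℝ) * (c (S.card - 1) * w S) - ((q - S.card : ℕ) : ℝ) * (c S.card * w S)) = 0 := by
    intro S _ hS0 hSu
    obtain ⟨t, ht⟩ : ∃ t, S.card = t + 1 := by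
      cases h : S.card with
      | zero => exact absurd (Finset.card_eq_zero.mp h) hS0
      | succ n => exact ⟨n, rfl⟩
    have hlt : S.card < q := by
      have := Finset.card_lt_card (lt_of_le_of_ne (Finset.subset_univ S) hSu)
      simpa using this
    have ht1 : t + 1 ≤ q - 1 := by omega
    have hnat : (q - 1).choose (t + 1) * (t + 1) = (q - 1).choose t * (q - 1 - t) :=
      Nat.choose_succ_right_eq _ _
    have h1 : (0:ℕ) < (q - 1).choose t := Nat.choose_pos (by omega)
    have h2 : (0:ℕ) < (q - 1).choose (t + 1) := Nat.choose_pos ht1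
    have hqS : q - S.card = q - 1 - t := by omega
    rw [ht]
    have hqS' : q - (t + 1) = q - 1 - t := by omega
    rw [hqS']
    simp only [hc, Nat.add_sub_cancel]
    have e1 : ((q-1).choose t : ℝ) ≠ 0 := Nat.cast_ne_zero.mpr h1.ne'
    have e2 : ((q-1).choose (t+1) : ℝ) ≠ 0 := Nat.cast_ne_zero.mpr h2.ne'
    have hR : ((q - 1).choose (t + 1) : ℝ) * (t + 1) = ((q - 1).choose t : ℝ) * ((q - 1 - t : ℕ) : ℝ) := by
      exact_mod_cast congrArg (Nat.cast : ℕ → ℝ) hnat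
    field_simp
    push_cast
    linear_combination (w S) * hR
  -- finish
  have hsplit : ∑ S ∈ (Finset.univ : Finset (Fin q)).powerset,
      ((S.card : ℝ) * (c (S.card - 1) * w S) - ((q - S.card : ℕ) : ℝ) * (c S.card * w S))
      = (q : ℝ) * w Finset.univ - (q : ℝ) * w ∅ := by
    have hne : (∅ : Finset (Fin q)) ≠ Finset.univ := by
      intro h
      have : (0:ℕ) < q := hq
      have := Finset.card_fin q
      rw [← h] at this
      simp at this; omega
    have hsub : ({∅, Finset.univ} : Finset (Finset (Fin q))) ⊆ (Finset.univ : Finset (Fin q)).powerset := by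
      intro S hS
      simp only [Finset.mem_insert, Finset.mem_singleton] at hS
      rcases hS with rfl | rfl <;> simp
    rw [← Finset.sum_subset hsub]
    · rw [Finset.sum_pair hne]
      have c0 : c 0 = 1 := by simp [hc]
      have cq : c (q - 1) = 1 := by simp [hc]
      simp only [Finset.card_empty, Finset.card_univ, Fintype.card_fin, Nat.sub_self, Nat.sub_zero, c0, cq]
      push_cast
      ring
    · intro S hS hSn
      simp only [Finset.mem_insert, Finset.mem_singleton, not_or] at hSn
      exact coeff S hS hSn.1 hSn.2
  unfold shapley
  rw [← Finset.mul_sum, key, hsplit]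
  have : (q:ℝ) ≠ 0 := Nat.cast_ne_zero.mpr (by omega)
  field_simp

lemma shapley_eq_zero {q : ℕ} (w : Finset (Fin q) → ℝ) (j : Fin q)
    (h : ∀ C, w (insert j C) = w C) : shapley w j = 0 := by
  simp [shapley, h]

lemma shapley_sum {q K : ℕ} (f : Fin K → Finset (Fin q) → ℝ) (j : Fin q) :
    shapley (fun C => ∑ l, f l C) j = ∑ l, shapley (f l) j := by
  unfold shapley
  rw [← Finset.mul_sum]
  congr 1
  rw [Finset.sum_comm]
  refine Finset.sum_congr rfl fun C _ => ?_
  rw [← Finset.sum_sub_distrib, Finset.mul_sum]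

/-- additive recovery property of the paired single-permutation
PermutationSHAP estimates. -/
theorem paired_permutationSHAP_additive_recovery (q K : ℕ) (hq : 1 ≤ q)
    (𝒜 : Fin K → Finset (Fin q))
    (hne : ∀ k, (𝒜 k).Nonempty)
    (hdisj : ∀ k l, k ≠ l → Disjoint (𝒜 k) (𝒜 l))
    (hcover : Finset.univ.biUnion 𝒜 = (Finset.univ : Finset (Fin q)))
    (ν : Finset (Fin q) → ℝ) (νk : Fin K → Finset (Fin q) → ℝ)
    (hν : ∀ C : Finset (Fin q), ν C = ∑ k, νk k (C ∩ 𝒜 k))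
    (π : Equiv.Perm (Fin q)) (k : Fin K) :
    ∑ j ∈ 𝒜 k, pairedEstimate ν π j = ∑ j ∈ 𝒜 k, shapley ν j := by
  classical
  have hnotmem : ∀ j ∈ 𝒜 k, ∀ l, l ≠ k → j ∉ 𝒜 l := by
    intro j hj l hl
    exact fun h => Finset.disjoint_left.mp (hdisj k l (Ne.symm hl)) hj h
  -- marginal contribution reduces to block k
  have hmarg : ∀ j ∈ 𝒜 k, ∀ P : Finset (Fin q),
      ν (insert j P) - ν P = νk k (insert j (P ∩ 𝒜 k)) - νk k (P ∩ 𝒜 k) := by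
    intro j hj P
    rw [hν, hν, ← Finset.sum_sub_distrib]
    rw [Finset.sum_eq_single_of_mem k (Finset.mem_univ k)]
    · rw [Finset.insert_inter_of_mem hj]
    · intro l _ hl
      rw [Finset.insert_inter_of_notMem (hnotmem j hj l hl), sub_self]
  -- telescoping sum for one permutation
  have htel : ∀ σ : Equiv.Perm (Fin q),
      ∑ j ∈ 𝒜 k, (ν (insert j (preceding σ j)) - ν (preceding σ j))
        = νk k (𝒜 k) - νk k ∅ := by
    intro σ
    have hP : ∀ j ∈ 𝒜 k, preceding σ j ∩ 𝒜 k
        = (𝒜 k).filter (fun i => σ.symm i < σ.symm j) := by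
      intro j hj
      ext x
      simp only [Finset.mem_inter, Finset.mem_filter, preceding, mem_preceding']
      tauto
    calc ∑ j ∈ 𝒜 k, (ν (insert j (preceding σ j)) - ν (preceding σ j))
        = ∑ j ∈ 𝒜 k, (νk k (insert j ((𝒜 k).filter (fun i => σ.symm i < σ.symm j)))
            - νk k ((𝒜 k).filter (fun i => σ.symm i < σ.symm j))) := by
          refine Finset.sum_congr rfl fun j hj => ?_
          rw [hmarg j hj, hP j hj]
      _ = νk k (𝒜 k) - νk k ∅ := telescope (νk k) σ.symm σ.symm.injective (𝒜 k)
  -- LHS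
  have hLHS : ∑ j ∈ 𝒜 k, pairedEstimate ν π j = νk k (𝒜 k) - νk k ∅ := by
    unfold pairedEstimate
    have : ∀ j ∈ 𝒜 k, (1 / 2 : ℝ) * (ν (insert j (preceding π j)) - ν (preceding π j)
        + ν (insert j (preceding (reversedPerm π) j)) - ν (preceding (reversedPerm π) j))
        = (1/2 : ℝ) * ((ν (insert j (preceding π j)) - ν (preceding π j))
          + (ν (insert j (preceding (reversedPerm π) j)) - ν (preceding (reversedPerm π) j))) := by
      intro j _; ring
    rw [Finset.sum_congr rfl this, ← Finset.mul_sum, Finset.sum_add_distrib,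
      htel π, htel (reversedPerm π)]
    ring
  -- RHS
  have hRHS : ∑ j ∈ 𝒜 k, shapley ν j = νk k (𝒜 k) - νk k ∅ := by
    have hνeq : ν = fun C => ∑ l, νk l (C ∩ 𝒜 l) := funext hν
    rw [hνeq]
    have : ∀ j ∈ 𝒜 k, shapley (fun C => ∑ l, νk l (C ∩ 𝒜 l)) j
        = shapley (fun C => νk k (C ∩ 𝒜 k)) j := by
      intro j hj
      rw [shapley_sum (fun l C => νk l (C ∩ 𝒜 l)) j]
      refine Finset.sum_eq_single_of_mem k (Finset.mem_univ k) ?_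
      intro l _ hl
      refine shapley_eq_zero _ _ fun C => ?_
      rw [Finset.insert_inter_of_notMem (hnotmem j hj l hl)]
    rw [Finset.sum_congr rfl this]
    have hext : ∑ j ∈ 𝒜 k, shapley (fun C => νk k (C ∩ 𝒜 k)) j
        = ∑ j : Fin q, shapley (fun C => νk k (C ∩ 𝒜 k)) j := by
      apply Finset.sum_subset (Finset.subset_univ _)
      intro j _ hj
      refine shapley_eq_zero _ _ fun C => ?_
      rw [Finset.insert_inter_of_notMem hj]
    rw [hext, shapley_efficiency hq]
    simp
  rw [hLHS, hRHS]
end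

section
/- Suppose ν is a bilinear form given by a matrix A = (a_{j,k}) ∈ ℝ^{q×q} with q ≥ 2. Let Z_1,…,Z_n ∈ {0,1}^q be indicator vectors of nonempty proper coalitions such that Σ_{i=1}^n W(Z_i)W(Z_i)ᵀ is invertible. Then the unique minimizer over ψ ∈ ℝ^{q−1} of the paired least squares objective Σ_{i=1}^n [(ν(Z_i) − Z_{i,q} ν(1) − W(Z_i)ᵀψ)² + (ν(1−Z_i) − (1−Z_{i,q}) ν(1) − W(1−Z_i)ᵀψ)²] is ψ = (φ_1,…,φ_{q−1}), the first q−1 Shapley values of ν, i.e. ψ_j = ½ Σ_{k=1}^q (a_{j,k} + a_{k,j}) for 1 ≤ j ≤ q−1. -/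
open Finset

/-- The set of nonempty proper coalitions of `Fin q`. -/
def properCoalitions (q : ℕ) : Finset (Finset (Fin q)) :=
  Finset.univ.powerset.filter
    (fun C : Finset (Fin q) => C.Nonempty ∧ C ≠ Finset.univ)

/-- Shapley kernel weight of a coalition. -/
noncomputable def kernelWeight (q : ℕ) (C : Finset (Fin q)) : ℝ :=
  ((q : ℝ) - 1) /
    ((q.choose C.card : ℝ) * (C.card : ℝ) * ((q : ℝ) - (C.card : ℝ)))

/-- Normalized Shapley kernel probability weights. -/
noncomputable def kernelProb (q : ℕ) (C : Finset (Fin q)) : ℝ :=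
  kernelWeight q C / ∑ C' ∈ properCoalitions q, kernelWeight q C'

/-- The last player `q` (index `q - 1` in `Fin q`). -/
def lastPlayer (q : ℕ) (hq : 2 ≤ q) : Fin q := ⟨q - 1, by omega⟩

/-- Indicator `Z_q` of the last player belonging to the coalition `C`. -/
noncomputable def Zlast (q : ℕ) (hq : 2 ≤ q) (C : Finset (Fin q)) : ℝ :=
  if lastPlayer q hq ∈ C then 1 else 0

/-- The vector `W(Z) = Z̃ - Z_q · 1̃ ∈ ℝ^{q-1}` for the coalition `C` with
indicator vector `Z`. -/
noncomputable def Wvec (q : ℕ) (hq : 2 ≤ q) (C : Finset (Fin q))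
    (i : Fin (q - 1)) : ℝ :=
  (if Fin.castLE (Nat.sub_le q 1) i ∈ C then (1 : ℝ) else 0) - Zlast q hq C

/-- The first `q - 1` Shapley values `φ̃ ∈ ℝ^{q-1}`. -/
noncomputable def shapleyTrunc (q : ℕ) (ν : Finset (Fin q) → ℝ)
    (i : Fin (q - 1)) : ℝ :=
  shapley ν (Fin.castLE (Nat.sub_le q 1) i)


lemma gauss_sum_real (m : ℕ) : (∑ s ∈ Finset.range m, ((s : ℝ) + 1)) = m * (m + 1) / 2 := by
  induction m with
  | zero => simp
  | succ m ih => rw [Finset.sum_range_succ, ih]; push_cast; ring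

lemma sumU {α : Type*} [DecidableEq α] (S : Finset α) :
    ∑ C ∈ S.powerset, ((S.card.choose C.card : ℝ))⁻¹ = S.card + 1 := by
  rw [Finset.sum_powerset_apply_card (fun m => ((S.card.choose m : ℝ))⁻¹)]
  rw [Finset.sum_congr rfl (fun m hm => ?_), Finset.sum_const, nsmul_eq_mul, mul_one]
  · simp
  · rw [nsmul_eq_mul, mul_inv_cancel₀]
    have := Nat.choose_pos (Nat.lt_succ_iff.1 (Finset.mem_range.1 hm))
    positivity

lemma sumT {α : Type*} [DecidableEq α] (S : Finset α) (k : α) (hk : k ∈ S) :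
    ∑ C ∈ S.powerset, (if k ∈ C then ((S.card.choose C.card : ℝ))⁻¹ else 0)
      = ((S.card : ℝ) + 1) / 2 := by
  have hm : 1 ≤ S.card := Finset.card_pos.2 ⟨k, hk⟩
  have hins : S = insert k (S.erase k) := (Finset.insert_erase hk).symm
  have hnot : k ∉ S.erase k := Finset.notMem_erase k S
  have hcard : (S.erase k).card = S.card - 1 := Finset.card_erase_of_mem hk
  nth_rewrite 1 [hins]
  rw [Finset.sum_powerset_insert hnot]
  have h1 : ∑ t ∈ (S.erase k).powerset,
      (if k ∈ t then ((S.card.choose t.card : ℝ))⁻¹ else 0) = 0 := by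
    refine Finset.sum_eq_zero fun t ht => ?_
    have : k ∉ t := fun h => hnot (Finset.mem_powerset.1 ht h)
    simp [this]
  rw [h1, zero_add]
  have h2 : ∀ t ∈ (S.erase k).powerset,
      (if k ∈ insert k t then ((S.card.choose (insert k t).card : ℝ))⁻¹ else 0)
        = ((S.card.choose (t.card + 1) : ℝ))⁻¹ := by
    intro t ht
    have hk' : k ∉ t := fun h => hnot (Finset.mem_powerset.1 ht h)
    rw [if_pos (Finset.mem_insert_self k t), Finset.card_insert_of_notMem hk']
  rw [Finset.sum_congr rfl h2, Finset.sum_powerset_apply_card (fun m => ((S.card.choose (m+1) : ℝ))⁻¹), hcard]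
  have hr : S.card - 1 + 1 = S.card := Nat.succ_pred_eq_of_pos hm
  rw [hr]
  have key : ∀ s ∈ Finset.range S.card,
      ((S.card - 1).choose s) • ((S.card.choose (s + 1) : ℝ))⁻¹ = ((s : ℝ) + 1) / S.card := by
    intro s hs
    have hs' : s < S.card := Finset.mem_range.1 hs
    have hid : S.card * (S.card - 1).choose s = S.card.choose (s + 1) * (s + 1) := by
      have h := Nat.add_one_mul_choose_eq (S.card - 1) s
      rwa [hr] at h
    have hpos : 0 < S.card.choose (s + 1) := Nat.choose_pos hs'
    have hcast : (S.card : ℝ) * ((S.card - 1).choose s : ℝ)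
        = (S.card.choose (s + 1) : ℝ) * ((s : ℝ) + 1) := by
      exact_mod_cast congrArg (Nat.cast : ℕ → ℝ) hid
    rw [nsmul_eq_mul]
    have hS0 : (S.card : ℝ) ≠ 0 := Nat.cast_ne_zero.2 (by omega)
    have hc : ((S.card.choose (s + 1)) : ℝ) ≠ 0 := Nat.cast_ne_zero.2 hpos.ne'
    rw [eq_div_iff hS0, mul_right_comm, mul_comm _ (S.card : ℝ), hcast, mul_right_comm,
      mul_inv_cancel₀ hc, one_mul]
  rw [Finset.sum_congr rfl key, ← Finset.sum_div, gauss_sum_real]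
  rw [div_eq_iff (Nat.cast_ne_zero.2 (by omega))]
  ring

lemma shapley_bilinear {q : ℕ} (hq : 1 ≤ q) (A : Fin q → Fin q → ℝ)
    (ν : Finset (Fin q) → ℝ)
    (hν : ∀ C : Finset (Fin q), ν C = ∑ j ∈ C, ∑ k ∈ C, A j k) (j : Fin q) :
    shapley ν j = (1 / 2 : ℝ) * ∑ k, (A j k + A k j) := by
  set S : Finset (Fin q) := Finset.univ.erase j with hSdef
  have hScard : S.card = q - 1 := by
    rw [hSdef, Finset.card_erase_of_mem (Finset.mem_univ j), Finset.card_univ,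
      Fintype.card_fin]
  have hq0 : (q : ℝ) ≠ 0 := Nat.cast_ne_zero.2 (by omega)
  have hScast : (S.card : ℝ) + 1 = q := by
    rw [hScard]; push_cast [Nat.cast_sub hq]; ring
  have hdiff : ∀ C ∈ S.powerset, ν (insert j C) - ν C
      = A j j + (∑ k ∈ C, A j k + ∑ k ∈ C, A k j) := by
    intro C hC
    have hj : j ∉ C := fun h =>
      (Finset.mem_erase.1 (Finset.mem_powerset.1 hC h)).1 rfl
    rw [hν, hν, Finset.sum_insert hj]
    simp only [Finset.sum_insert hj, Finset.sum_add_distrib]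
    ring
  unfold shapley
  rw [show ((q:ℕ) - 1) = S.card from hScard.symm]
  rw [Finset.sum_congr rfl (fun C hC => by rw [hdiff C hC])]
  have expand : ∑ C ∈ S.powerset, ((S.card.choose C.card : ℝ))⁻¹ *
      (A j j + (∑ k ∈ C, A j k + ∑ k ∈ C, A k j))
      = ((S.card : ℝ) + 1) * A j j
        + ((S.card : ℝ) + 1) / 2 * ∑ k ∈ S, (A j k + A k j) := by
    have inner : ∀ C ∈ S.powerset, ((S.card.choose C.card : ℝ))⁻¹ *
        (A j j + (∑ k ∈ C, A j k + ∑ k ∈ C, A k j))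
        = ((S.card.choose C.card : ℝ))⁻¹ * A j j
          + ∑ k ∈ S, (if k ∈ C then ((S.card.choose C.card : ℝ))⁻¹ else 0)
              * (A j k + A k j) := by
      intro C hC
      have hsub : C ⊆ S := Finset.mem_powerset.1 hC
      have : ∑ k ∈ S, (if k ∈ C then ((S.card.choose C.card : ℝ))⁻¹ else 0)
              * (A j k + A k j)
          = ∑ k ∈ C, ((S.card.choose C.card : ℝ))⁻¹ * (A j k + A k j) := by
        simp only [ite_mul, zero_mul, Finset.sum_ite_mem, Finset.inter_eq_right.2 hsub]
      rw [this, ← Finset.mul_sum, Finset.sum_add_distrib]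
      ring
    rw [Finset.sum_congr rfl inner, Finset.sum_add_distrib]
    congr 1
    · rw [← Finset.sum_mul, sumU]
    · rw [Finset.sum_comm, Finset.mul_sum]
      refine Finset.sum_congr rfl fun k hk => ?_
      rw [← Finset.sum_mul, sumT S k hk]
  rw [expand, hScast]
  have split : ∑ k : Fin q, (A j k + A k j)
      = (A j j + A j j) + ∑ k ∈ S, (A j k + A k j) := by
    rw [hSdef, ← Finset.add_sum_erase _ _ (Finset.mem_univ j)]
  rw [split]
  field_simp
  ring

lemma Zlast_compl (q : ℕ) (hq : 2 ≤ q) (C : Finset (Fin q)) :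
    Zlast q hq (Finset.univ \ C) = 1 - Zlast q hq C := by
  unfold Zlast
  by_cases h : lastPlayer q hq ∈ C <;> simp [h]

lemma Wvec_compl (q : ℕ) (hq : 2 ≤ q) (C : Finset (Fin q)) (a : Fin (q - 1)) :
    Wvec q hq (Finset.univ \ C) a = - Wvec q hq C a := by
  unfold Wvec
  rw [Zlast_compl]
  by_cases h : Fin.castLE (Nat.sub_le q 1) a ∈ C <;> simp [h]

lemma ind_sum {q : ℕ} (C : Finset (Fin q)) (f : Fin q → ℝ) :
    ∑ j ∈ C, f j = ∑ j : Fin q, (if j ∈ C then (1 : ℝ) else 0) * f j := by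
  simp only [ite_mul, one_mul, zero_mul, Finset.sum_ite_mem, Finset.univ_inter]

lemma nu_sub_compl {q : ℕ} (A : Fin q → Fin q → ℝ) (ν : Finset (Fin q) → ℝ)
    (hν : ∀ C : Finset (Fin q), ν C = ∑ j ∈ C, ∑ k ∈ C, A j k)
    (C : Finset (Fin q)) :
    ν C - ν (Finset.univ \ C) = (∑ j ∈ C, ∑ k, (A j k + A k j)) - ν Finset.univ := by
  have hsub := Finset.subset_univ C
  have h1 : ν (Finset.univ \ C)
      = (∑ j, ∑ k, A j k - ∑ j, ∑ k ∈ C, A j k)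
        - (∑ j ∈ C, ∑ k, A j k - ∑ j ∈ C, ∑ k ∈ C, A j k) := by
    rw [hν]
    rw [Finset.sum_congr rfl (fun j (_ : j ∈ Finset.univ \ C) =>
      Finset.sum_sdiff_eq_sub hsub (f := fun k => A j k))]
    rw [Finset.sum_sdiff_eq_sub hsub, Finset.sum_sub_distrib, Finset.sum_sub_distrib]
  have hswap : ∑ j ∈ C, ∑ k, A k j = ∑ j, ∑ k ∈ C, A j k := Finset.sum_comm
  have h2 : ∑ j ∈ C, ∑ k, (A j k + A k j)
      = ∑ j ∈ C, ∑ k, A j k + ∑ j ∈ C, ∑ k, A k j := by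
    simp only [Finset.sum_add_distrib]
  rw [h1, h2, hswap, hν C, hν Finset.univ]
  ring

lemma sum_s_eq {q : ℕ} (A : Fin q → Fin q → ℝ) (ν : Finset (Fin q) → ℝ)
    (hν : ∀ C : Finset (Fin q), ν C = ∑ j ∈ C, ∑ k ∈ C, A j k) :
    ∑ j, ∑ k, (A j k + A k j) = 2 * ν Finset.univ := by
  rw [hν]
  simp only [Finset.sum_add_distrib]
  rw [Finset.sum_comm (f := fun j k => A k j)]
  ring

lemma key_identity {q : ℕ} (hq : 2 ≤ q) (A : Fin q → Fin q → ℝ)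
    (ν : Finset (Fin q) → ℝ)
    (hν : ∀ C : Finset (Fin q), ν C = ∑ j ∈ C, ∑ k ∈ C, A j k)
    (C : Finset (Fin q)) :
    ν C - Zlast q hq C * ν Finset.univ
      - (ν (Finset.univ \ C) - Zlast q hq (Finset.univ \ C) * ν Finset.univ)
      = 2 * ∑ a, Wvec q hq C a * shapleyTrunc q ν a := by
  obtain ⟨m, rfl⟩ : ∃ m, q = m + 1 := ⟨q - 1, by omega⟩
  change ν C - Zlast (m + 1) hq C * ν Finset.univ
      - (ν (Finset.univ \ C) - Zlast (m + 1) hq (Finset.univ \ C) * ν Finset.univ)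
      = 2 * ∑ a : Fin m, Wvec (m + 1) hq C a * shapleyTrunc (m + 1) ν a
  have hq1 : 1 ≤ m + 1 := by omega
  have hL : lastPlayer (m + 1) hq = Fin.last m := rfl
  have hterm : ∀ a : Fin m, Wvec (m + 1) hq C a * shapleyTrunc (m + 1) ν a
      = ((if Fin.castSucc a ∈ C then (1 : ℝ) else 0)
          - (if Fin.last m ∈ C then (1 : ℝ) else 0))
        * ((1 / 2 : ℝ) * ∑ k, (A (Fin.castSucc a) k + A k (Fin.castSucc a))) := by
    intro a
    have hc : Fin.castLE (Nat.sub_le (m + 1) 1) a = Fin.castSucc a := rfl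
    unfold Wvec shapleyTrunc Zlast
    rw [hc, hL, shapley_bilinear hq1 A ν hν]
  rw [Finset.sum_congr rfl (fun a _ => hterm a)]
  rw [show (∑ a : Fin m, ((if Fin.castSucc a ∈ C then (1 : ℝ) else 0)
          - (if Fin.last m ∈ C then (1 : ℝ) else 0))
        * ((1 / 2 : ℝ) * ∑ k, (A (Fin.castSucc a) k + A k (Fin.castSucc a))))
      = ∑ j : Fin (m + 1), ((if j ∈ C then (1 : ℝ) else 0)
          - (if Fin.last m ∈ C then (1 : ℝ) else 0))
        * ((1 / 2 : ℝ) * ∑ k, (A j k + A k j)) from by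
    rw [Fin.sum_univ_castSucc (f := fun j => ((if j ∈ C then (1 : ℝ) else 0)
          - (if Fin.last m ∈ C then (1 : ℝ) else 0))
        * ((1 / 2 : ℝ) * ∑ k, (A j k + A k j)))]
    simp]
  have e1 : ∑ j : Fin (m + 1), ((if j ∈ C then (1 : ℝ) else 0)
          - (if Fin.last m ∈ C then (1 : ℝ) else 0))
        * ((1 / 2 : ℝ) * ∑ k, (A j k + A k j))
      = ∑ j : Fin (m + 1), ((1 / 2 : ℝ) * ((if j ∈ C then (1 : ℝ) else 0)
            * ∑ k, (A j k + A k j))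
          - (1 / 2 : ℝ) * ((if Fin.last m ∈ C then (1 : ℝ) else 0)
            * ∑ k, (A j k + A k j))) :=
    Finset.sum_congr rfl fun j _ => by ring
  rw [e1, Finset.sum_sub_distrib]
  simp only [← Finset.mul_sum]
  have hA' : ∑ j : Fin (m + 1), (if j ∈ C then (1 : ℝ) else 0)
        * ∑ k, (A j k + A k j)
      = ∑ j ∈ C, ∑ k, (A j k + A k j) :=
    (ind_sum C fun j => ∑ k, (A j k + A k j)).symm
  have hB := sum_s_eq A ν hν
  have hC' := nu_sub_compl A ν hν C
  have hZc := Zlast_compl (m + 1) hq C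
  have hZL : Zlast (m + 1) hq C = (if Fin.last m ∈ C then (1 : ℝ) else 0) := by
    unfold Zlast; rw [hL]
  rw [hZc, hZL]
  linear_combination hC' - hA' + (if Fin.last m ∈ C then (1 : ℝ) else 0) * hB


/-- for a bilinear value function, the paired-sampling KernelSHAP
least squares problem has the first `q - 1` Shapley values as unique minimizer,
whenever the paired design has full rank. -/
theorem paired_kernelSHAP_exact_bilinear (q : ℕ) (hq : 2 ≤ q)
    (A : Fin q → Fin q → ℝ) (ν : Finset (Fin q) → ℝ)
    (hν : ∀ C : Finset (Fin q), ν C = ∑ j ∈ C, ∑ k ∈ C, A j k)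
    (n : ℕ) (Z : Fin n → Finset (Fin q))
    (hZ : ∀ i, (Z i).Nonempty ∧ Z i ≠ Finset.univ)
    (hfull : IsUnit (∑ i : Fin n,
      (Matrix.of (fun a b => Wvec q hq (Z i) a * Wvec q hq (Z i) b) :
        Matrix (Fin (q - 1)) (Fin (q - 1)) ℝ))) :
    (∀ ψ : Fin (q - 1) → ℝ, ψ ≠ shapleyTrunc q ν →
      (∑ i : Fin n,
        ((ν (Z i) - Zlast q hq (Z i) * ν Finset.univ
            - ∑ a, Wvec q hq (Z i) a * shapleyTrunc q ν a) ^ 2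
          + (ν (Finset.univ \ Z i)
              - Zlast q hq (Finset.univ \ Z i) * ν Finset.univ
              - ∑ a, Wvec q hq (Finset.univ \ Z i) a * shapleyTrunc q ν a) ^ 2))
        <
      (∑ i : Fin n,
        ((ν (Z i) - Zlast q hq (Z i) * ν Finset.univ
            - ∑ a, Wvec q hq (Z i) a * ψ a) ^ 2
          + (ν (Finset.univ \ Z i)
              - Zlast q hq (Finset.univ \ Z i) * ν Finset.univ
              - ∑ a, Wvec q hq (Finset.univ \ Z i) a * ψ a) ^ 2))) ∧
    (∀ a : Fin (q - 1),
      shapleyTrunc q ν a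
        = (1 / 2 : ℝ) * ∑ k, (A (Fin.castLE (Nat.sub_le q 1) a) k
            + A k (Fin.castLE (Nat.sub_le q 1) a))) := by
  have hq1 : 1 ≤ q := by omega
  constructor
  · intro ψ hψ
    set φ := shapleyTrunc q ν with hφ
    have hWc : ∀ (C : Finset (Fin q)) (t : Fin (q - 1) → ℝ),
        ∑ a, Wvec q hq (Finset.univ \ C) a * t a
          = - ∑ a, Wvec q hq C a * t a := by
      intro C t
      rw [Finset.sum_congr rfl (fun a (_ : a ∈ Finset.univ) =>
        (by rw [Wvec_compl]; ring :
          Wvec q hq (Finset.univ \ C) a * t a = -(Wvec q hq C a * t a))),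
        Finset.sum_neg_distrib]
    set d : Fin n → ℝ := fun i => ∑ a, Wvec q hq (Z i) a * (ψ a - φ a) with hd
    have hterm : ∀ i : Fin n,
        (ν (Z i) - Zlast q hq (Z i) * ν Finset.univ
            - ∑ a, Wvec q hq (Z i) a * ψ a) ^ 2
          + (ν (Finset.univ \ Z i)
              - Zlast q hq (Finset.univ \ Z i) * ν Finset.univ
              - ∑ a, Wvec q hq (Finset.univ \ Z i) a * ψ a) ^ 2
        = ((ν (Z i) - Zlast q hq (Z i) * ν Finset.univ
            - ∑ a, Wvec q hq (Z i) a * φ a) ^ 2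
          + (ν (Finset.univ \ Z i)
              - Zlast q hq (Finset.univ \ Z i) * ν Finset.univ
              - ∑ a, Wvec q hq (Finset.univ \ Z i) a * φ a) ^ 2)
          + 2 * d i ^ 2 := by
      intro i
      have hk := key_identity hq A ν hν (Z i)
      have h1 := hWc (Z i) ψ
      have h2 := hWc (Z i) φ
      have h3 : d i = ∑ a, Wvec q hq (Z i) a * ψ a
          - ∑ a, Wvec q hq (Z i) a * φ a := by
        rw [hd]
        simp only [mul_sub]
        rw [Finset.sum_sub_distrib]
      rw [← hφ] at hk
      rw [h1, h2]
      linear_combination (2 * ((∑ a, Wvec q hq (Z i) a * φ a)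
          - (∑ a, Wvec q hq (Z i) a * ψ a))) * hk
        - (2 * (d i + (∑ a, Wvec q hq (Z i) a * ψ a)
            - (∑ a, Wvec q hq (Z i) a * φ a))) * h3
    conv_rhs => rw [Finset.sum_congr rfl (fun i (_ : i ∈ Finset.univ) => hterm i),
      Finset.sum_add_distrib]
    have hd0 : ∃ i, d i ≠ 0 := by
      by_contra h
      push_neg at h
      apply hψ
      have hinj := Matrix.mulVec_injective_iff_isUnit.2 hfull
      have hmv : (∑ i : Fin n,
          (Matrix.of (fun a b => Wvec q hq (Z i) a * Wvec q hq (Z i) b) :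
            Matrix (Fin (q - 1)) (Fin (q - 1)) ℝ)).mulVec
          (fun a => ψ a - φ a) = 0 := by
        funext a
        simp only [Matrix.mulVec, dotProduct, Matrix.sum_apply,
          Matrix.of_apply, Pi.zero_apply]
        rw [Finset.sum_congr rfl (fun b (_ : b ∈ Finset.univ) =>
          Finset.sum_mul Finset.univ (fun i => Wvec q hq (Z i) a * Wvec q hq (Z i) b)
            (ψ b - φ b)), Finset.sum_comm]
        refine Finset.sum_eq_zero fun i _ => ?_
        have e : ∑ b, Wvec q hq (Z i) a * Wvec q hq (Z i) b * (ψ b - φ b)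
            = Wvec q hq (Z i) a * d i := by
          rw [hd, Finset.mul_sum]
          exact Finset.sum_congr rfl fun b _ => by ring
        rw [e, h i, mul_zero]
      have hv : (fun a => ψ a - φ a) = 0 := hinj (by
        rw [hmv, Matrix.mulVec_zero])
      funext a
      have := congrFun hv a
      simp only [Pi.zero_apply] at this
      linarith
    obtain ⟨i0, hi0⟩ := hd0
    have hpos : 0 < ∑ i : Fin n, 2 * d i ^ 2 :=
      Finset.sum_pos' (fun i _ => by positivity)
        ⟨i0, Finset.mem_univ i0, by positivity⟩
    linarith
  · intro a
    unfold shapleyTrunc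
    exact shapley_bilinear hq1 A ν hν _
end
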